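/- arXiv:1905.08075 — 3 statements merged into one kernel-verified Lean document; each statement's English description precedes it below -/
import Mathlib

section
/- The family of small subsets of ℕ is an ideal on ℕ: ℕ itself is not small, every subset of a small set is small, and the union of two small sets is small. -/
open Set Filter Topology

/-- An upper quasi-density on ℕ. -/
def IsUpperQuasiDensity (μ : Set ℕ → ℝ) : Prop :=
  μ Set.univ = 1 ∧
  (∀ X : Set ℕ, μ X ≤ 1) ∧
  (∀ X Y : Set ℕ, μ (X ∪ Y) ≤ μ X + μ Y) ∧
  (∀ (X : Set ℕ) (k : ℕ), 0 < k → μ ((fun x => k * x) '' X) = μ X / k) ∧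
  (∀ (X : Set ℕ) (h : ℕ), μ ((fun x => x + h) '' X) = μ X)

/-- An upper density on ℕ: a monotone upper quasi-density. -/
def IsUpperDensity (μ : Set ℕ → ℝ) : Prop :=
  IsUpperQuasiDensity μ ∧ ∀ X Y : Set ℕ, X ⊆ Y → μ X ≤ μ Y

/-- A set of naturals is small if every upper quasi-density vanishes on it. -/
def SmallSet (X : Set ℕ) : Prop :=
  ∀ μ : Set ℕ → ℝ, IsUpperQuasiDensity μ → μ X = 0

/-- The upper asymptotic density of a set of naturals. -/
noncomputable def upperAsymptoticDensity (X : Set ℕ) : ℝ :=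
  limsup (fun n : ℕ => ((X ∩ Set.Icc 1 n).ncard : ℝ) / n) atTop

/-- The arithmetic progression k·ℕ + h. -/
def AP (k h : ℕ) : Set ℕ := {x : ℕ | ∃ m : ℕ, x = k * m + h}

/-- A finite union of arithmetic progressions of ℕ. -/
def IsFinUnionAP (A : Set ℕ) : Prop :=
  ∃ s : Finset (ℕ × ℕ), (∀ p ∈ s, 0 < p.1) ∧ A = ⋃ p ∈ s, AP p.1 p.2

/-- The upper Buck density of a set of naturals. -/
noncomputable def buckDensity (X : Set ℕ) : ℝ :=
  sInf {d : ℝ | ∃ A : Set ℕ, IsFinUnionAP A ∧ X ⊆ A ∧ d = upperAsymptoticDensity A}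

/-- `rk k X` is the number of residues h ∈ [0, k-1] with X ∩ (k·ℕ + h) ≠ ∅. -/
noncomputable def rk (k : ℕ) (X : Set ℕ) : ℕ :=
  {h : ℕ | h < k ∧ (X ∩ AP k h).Nonempty}.ncard

/-- `wk μ k S` is the number of residues h ∈ [0, k-1] with μ(S ∩ (k·ℕ + h)) ≠ 0. -/
noncomputable def wk (μ : Set ℕ → ℝ) (k : ℕ) (S : Set ℕ) : ℕ :=
  {h : ℕ | h < k ∧ μ (S ∩ AP k h) ≠ 0}.ncard

lemma mem_AP_iff {k h x : ℕ} (hh : h < k) : x ∈ AP k h ↔ x % k = h := by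
  constructor
  · rintro ⟨m, rfl⟩
    simp [Nat.mul_add_mod, Nat.mod_eq_of_lt hh]
  · intro hx
    exact ⟨x / k, by rw [← hx, Nat.div_add_mod]⟩

lemma rk_set_eq {k : ℕ} (hk : 0 < k) (X : Set ℕ) :
    {h : ℕ | h < k ∧ (X ∩ AP k h).Nonempty} = (fun x => x % k) '' X := by
  ext h
  constructor
  · rintro ⟨hh, x, hxX, hxap⟩
    exact ⟨x, hxX, (mem_AP_iff hh).mp hxap⟩
  · rintro ⟨x, hx, rfl⟩
    exact ⟨Nat.mod_lt _ hk, x, hx, (mem_AP_iff (Nat.mod_lt _ hk)).mpr rfl⟩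

lemma rk_eq {k : ℕ} (hk : 0 < k) (X : Set ℕ) :
    rk k X = ((fun x => x % k) '' X).ncard := by
  rw [rk, rk_set_eq hk]

lemma image_mod_finite {k : ℕ} (hk : 0 < k) (X : Set ℕ) :
    ((fun x => x % k) '' X).Finite :=
  (Set.finite_Iio k).subset (by rintro y ⟨x, _, rfl⟩; exact Nat.mod_lt _ hk)

lemma rk_le {k : ℕ} (hk : 0 < k) (X : Set ℕ) : rk k X ≤ k := by
  rw [rk_eq hk]
  calc ((fun x => x % k) '' X).ncard ≤ (Set.Iio k).ncard :=
        Set.ncard_le_ncard (by rintro y ⟨x, _, rfl⟩; exact Nat.mod_lt _ hk)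
          (Set.finite_Iio k)
    _ = k := by rw [← Finset.coe_Iio, Set.ncard_coe_finset, Nat.card_Iio]

lemma rk_mono {k : ℕ} (hk : 0 < k) {X Y : Set ℕ} (h : X ⊆ Y) : rk k X ≤ rk k Y := by
  rw [rk_eq hk, rk_eq hk]
  exact Set.ncard_le_ncard (Set.image_mono h) (image_mod_finite hk Y)

lemma rk_univ {k : ℕ} (hk : 0 < k) : rk k Set.univ = k := by
  rw [rk_eq hk]
  have : (fun x => x % k) '' Set.univ = Set.Iio k := by
    ext h
    constructor
    · rintro ⟨x, _, rfl⟩; exact Nat.mod_lt _ hk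
    · intro hh; exact ⟨h, trivial, Nat.mod_eq_of_lt hh⟩
  rw [this, ← Finset.coe_Iio, Set.ncard_coe_finset, Nat.card_Iio]

lemma rk_union_le {k : ℕ} (hk : 0 < k) (X Y : Set ℕ) :
    rk k (X ∪ Y) ≤ rk k X + rk k Y := by
  rw [rk_eq hk, rk_eq hk, rk_eq hk, Set.image_union]
  exact Set.ncard_union_le _ _

lemma rk_shift {k : ℕ} (hk : 0 < k) (X : Set ℕ) (h : ℕ) :
    rk k ((fun x => x + h) '' X) = rk k X := by
  rw [rk_eq hk, rk_eq hk, ← Set.image_comp]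
  have hcomp : ((fun x => x % k) ∘ (fun x => x + h)) =
      (fun r => (r + h) % k) ∘ (fun x => x % k) := by
    funext x
    simp [Function.comp, Nat.add_mod]
  rw [hcomp, Set.image_comp]
  apply Set.ncard_image_of_injOn
  rintro a ⟨x, _, rfl⟩ b ⟨y, _, rfl⟩ hab
  have : (x % k + h) % k = (y % k + h) % k := hab
  have h2 : x % k % k = y % k % k := Nat.ModEq.add_right_cancel' h this
  rwa [Nat.mod_mod_of_dvd x dvd_rfl, Nat.mod_mod_of_dvd y dvd_rfl] at h2

lemma rk_smul {k m : ℕ} (hk : 0 < k) (hm : 0 < m) (X : Set ℕ) :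
    rk (k * m) ((fun x => k * x) '' X) = rk m X := by
  rw [rk_eq (Nat.mul_pos hk hm), rk_eq hm, ← Set.image_comp]
  have hcomp : ((fun x => x % (k * m)) ∘ (fun x => k * x)) =
      (fun r => k * r) ∘ (fun x => x % m) := by
    funext x
    simp [Function.comp, Nat.mul_mod_mul_left]
  rw [hcomp, Set.image_comp]
  exact Set.ncard_image_of_injective _ (mul_right_injective₀ hk.ne')

lemma rk_mul_le {k m : ℕ} (hk : 0 < k) (hm : 0 < m) (X : Set ℕ) :
    rk (k * m) X ≤ m * rk k X := by
  classical
  have hkm : 0 < k * m := Nat.mul_pos hk hm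
  rw [rk_eq hkm, rk_eq hk]
  have hA := image_mod_finite hkm X
  have hB := image_mod_finite hk X
  rw [Set.ncard_eq_toFinset_card _ hA, Set.ncard_eq_toFinset_card _ hB]
  have := Finset.card_le_card_of_injOn (f := fun y => (y % k, y / k))
    (s := hA.toFinset) (t := hB.toFinset ×ˢ Finset.range m)
    (by
      intro y hy
      rw [Finset.mem_coe, Set.Finite.mem_toFinset] at hy
      obtain ⟨x, hx, rfl⟩ := hy
      rw [Finset.mem_coe, Finset.mem_product, Set.Finite.mem_toFinset, Finset.mem_range]
      constructor
      · exact ⟨x, hx, (Nat.mod_mod_of_dvd x ⟨m, rfl⟩).symm⟩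
      · exact Nat.div_lt_of_lt_mul (Nat.mod_lt _ hkm)
    )
    (by
      intro y1 _ y2 _ hy
      rw [Prod.mk.injEq] at hy
      obtain ⟨e1, e2⟩ := hy
      rw [← Nat.div_add_mod y1 k, ← Nat.div_add_mod y2 k, e1, e2])
  calc hA.toFinset.card ≤ (hB.toFinset ×ˢ Finset.range m).card := this
    _ = m * hB.toFinset.card := by rw [Finset.card_product, Finset.card_range, mul_comm]

def rhoSet (X : Set ℕ) : Set ℝ := {r : ℝ | ∃ k : ℕ, 0 < k ∧ r = (rk k X : ℝ) / k}

noncomputable def rho (X : Set ℕ) : ℝ := sInf (rhoSet X)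

lemma rhoSet_nonempty (X : Set ℕ) : (rhoSet X).Nonempty :=
  ⟨_, 1, one_pos, rfl⟩

lemma rhoSet_bddBelow (X : Set ℕ) : BddBelow (rhoSet X) := by
  refine ⟨0, ?_⟩
  rintro r ⟨k, hk, rfl⟩
  positivity

lemma rho_le {k : ℕ} (hk : 0 < k) (X : Set ℕ) : rho X ≤ (rk k X : ℝ) / k :=
  csInf_le (rhoSet_bddBelow X) ⟨k, hk, rfl⟩

lemma le_rho {c : ℝ} {X : Set ℕ} (h : ∀ k : ℕ, 0 < k → c ≤ (rk k X : ℝ) / k) :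
    c ≤ rho X := by
  apply le_csInf (rhoSet_nonempty X)
  rintro r ⟨k, hk, rfl⟩
  exact h k hk

lemma div_cast_mul {a : ℝ} (k m : ℕ) : a / ((k * m : ℕ) : ℝ) = a / m / k := by
  push_cast
  rw [div_div, mul_comm]

lemma f_mul_le {k m : ℕ} (hk : 0 < k) (hm : 0 < m) (X : Set ℕ) :
    (rk (k * m) X : ℝ) / ((k * m : ℕ) : ℝ) ≤ (rk k X : ℝ) / k := by
  have h1 : (rk (k * m) X : ℝ) ≤ (m : ℝ) * rk k X := by
    exact_mod_cast rk_mul_le hk hm X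
  have hk' : (0:ℝ) < k := by exact_mod_cast hk
  have hm' : (0:ℝ) < m := by exact_mod_cast hm
  have hkm' : (0:ℝ) < ((k * m : ℕ) : ℝ) := by positivity
  calc (rk (k * m) X : ℝ) / ((k * m : ℕ) : ℝ)
      ≤ ((m : ℝ) * rk k X) / ((k * m : ℕ) : ℝ) := by gcongr
    _ = (rk k X : ℝ) / k := by
        push_cast
        field_simp

lemma rho_nonneg (X : Set ℕ) : 0 ≤ rho X :=
  le_rho fun k _ => by positivity

lemma rho_univ : rho Set.univ = 1 := by
  have h : rhoSet Set.univ = {1} := by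
    ext r
    constructor
    · rintro ⟨k, hk, rfl⟩
      have : (k:ℝ) ≠ 0 := by exact_mod_cast hk.ne'
      simp [rk_univ hk, div_self this]
    · rintro rfl
      exact ⟨1, one_pos, by simp [rk_univ one_pos]⟩
  rw [rho, h, csInf_singleton]

lemma rho_le_one (X : Set ℕ) : rho X ≤ 1 := by
  have h0 := rho_le one_pos X
  have h1 : (rk 1 X : ℝ) ≤ 1 := by exact_mod_cast rk_le one_pos X
  calc rho X ≤ (rk 1 X : ℝ) / ((1:ℕ):ℝ) := h0
    _ ≤ 1 := by simpa using h1

lemma rho_union_le (X Y : Set ℕ) : rho (X ∪ Y) ≤ rho X + rho Y := by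
  rw [← sub_le_iff_le_add']
  apply le_rho
  intro k2 hk2
  rw [sub_le_iff_le_add', ← sub_le_iff_le_add]
  apply le_rho
  intro k1 hk1
  rw [sub_le_iff_le_add]
  have hkk := Nat.mul_pos hk1 hk2
  calc rho (X ∪ Y) ≤ (rk (k1 * k2) (X ∪ Y) : ℝ) / ((k1 * k2 : ℕ) : ℝ) :=
        rho_le hkk _
    _ ≤ ((rk (k1 * k2) X : ℝ) + rk (k1 * k2) Y) / ((k1 * k2 : ℕ) : ℝ) := by
        gcongr
        exact_mod_cast rk_union_le hkk X Y
    _ = (rk (k1 * k2) X : ℝ) / ((k1 * k2 : ℕ) : ℝ)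
        + (rk (k1 * k2) Y : ℝ) / ((k1 * k2 : ℕ) : ℝ) := by ring
    _ ≤ (rk k1 X : ℝ) / k1 + (rk k2 Y : ℝ) / k2 := by
        refine add_le_add (f_mul_le hk1 hk2 X) ?_
        have e2 := f_mul_le hk2 hk1 Y
        rwa [mul_comm k2 k1] at e2

lemma rho_smul {k : ℕ} (hk : 0 < k) (X : Set ℕ) :
    rho ((fun x => k * x) '' X) = rho X / k := by
  have hk' : (0:ℝ) < k := by exact_mod_cast hk
  apply le_antisymm
  · have h1 : (k : ℝ) * rho ((fun x => k * x) '' X) ≤ rho X := by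
      apply le_rho
      intro m hm
      have h2 := rho_le (Nat.mul_pos hk hm) ((fun x => k * x) '' X)
      rw [rk_smul hk hm, div_cast_mul] at h2
      rw [mul_comm, ← le_div_iff₀ hk']
      exact h2
    exact (le_div_iff₀' hk').mpr h1
  · apply le_rho
    intro n hn
    have e1 := f_mul_le hn hk ((fun x => k * x) '' X)
    rw [mul_comm n k] at e1
    rw [rk_smul hk hn] at e1
    refine le_trans ?_ e1
    rw [div_cast_mul]
    gcongr
    exact rho_le hn X

lemma rho_shift (X : Set ℕ) (h : ℕ) : rho ((fun x => x + h) '' X) = rho X := by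
  have : rhoSet ((fun x => x + h) '' X) = rhoSet X := by
    ext r
    constructor
    · rintro ⟨k, hk, rfl⟩
      exact ⟨k, hk, by rw [rk_shift hk]⟩
    · rintro ⟨k, hk, rfl⟩
      exact ⟨k, hk, by rw [rk_shift hk]⟩
  rw [rho, this, rho]

lemma rho_isUQD : IsUpperQuasiDensity rho :=
  ⟨rho_univ, rho_le_one, rho_union_le, fun X k hk => rho_smul hk X,
    fun X h => rho_shift X h⟩

section mu
variable {μ : Set ℕ → ℝ} (hμ : IsUpperQuasiDensity μ)
include hμ

lemma mu_empty : μ ∅ = 0 := by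
  have h4 := hμ.2.2.2.1 ∅ 2 (by norm_num)
  rw [Set.image_empty] at h4
  linarith

lemma mu_nonneg (S : Set ℕ) : 0 ≤ μ S := by
  have h3 := hμ.2.2.1 S Sᶜ
  rw [Set.union_compl_self, hμ.1] at h3
  have := hμ.2.1 Sᶜ
  linarith

lemma mu_subAP {S : Set ℕ} {k h : ℕ} (hk : 0 < k) (hS : S ⊆ AP k h) :
    μ S ≤ 1 / k := by
  have hge : ∀ x ∈ S, h ≤ x := by
    intro x hx
    obtain ⟨m, rfl⟩ := hS hx
    omega
  set S0 : Set ℕ := (fun x => x - h) '' S with hS0def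
  have hshift : (fun x => x + h) '' S0 = S := by
    ext y
    simp only [hS0def, Set.mem_image, exists_exists_and_eq_and]
    constructor
    · rintro ⟨x, hx, rfl⟩
      have h1 := hge x hx
      have h2 : x - h + h = x := by omega
      rwa [h2]
    · intro hy
      have h1 := hge y hy
      exact ⟨y, hy, by omega⟩
  have hmul : ∀ x ∈ S0, k ∣ x := by
    rintro x ⟨z, hz, rfl⟩
    obtain ⟨m, rfl⟩ := hS hz
    exact ⟨m, by show k * m + h - h = k * m; omega⟩
  set S1 : Set ℕ := (fun x => x / k) '' S0 with hS1def
  have hsc : (fun x => k * x) '' S1 = S0 := by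
    ext y
    simp only [hS1def, Set.mem_image, exists_exists_and_eq_and]
    constructor
    · rintro ⟨x, hx, rfl⟩
      obtain ⟨m, rfl⟩ := hmul x hx
      rwa [Nat.mul_div_cancel_left m hk]
    · intro hy
      refine ⟨y, hy, ?_⟩
      obtain ⟨m, rfl⟩ := hmul y hy
      rw [Nat.mul_div_cancel_left m hk]
  have e1 : μ S = μ S0 := by
    conv_lhs => rw [← hshift]
    exact hμ.2.2.2.2 S0 h
  have e2 : μ S0 = μ S1 / k := by
    conv_lhs => rw [← hsc]
    exact hμ.2.2.2.1 S1 k hk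
  have hk' : (0:ℝ) < k := by exact_mod_cast hk
  rw [e1, e2]
  have := hμ.2.1 S1
  rw [div_le_div_iff_of_pos_right hk']
  exact this

lemma mu_biUnion_le (s : Finset ℕ) (t : ℕ → Set ℕ) :
    μ (⋃ h ∈ s, t h) ≤ ∑ h ∈ s, μ (t h) := by
  classical
  induction s using Finset.induction_on with
  | empty => simp [mu_empty hμ]
  | insert a s' ha ih =>
    rw [Finset.set_biUnion_insert, Finset.sum_insert ha]
    exact (hμ.2.2.1 _ _).trans (add_le_add_right ih _)

lemma mu_le_f {k : ℕ} (hk : 0 < k) (X : Set ℕ) : μ X ≤ (rk k X : ℝ) / k := by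
  classical
  have hcover : X = ⋃ h ∈ Finset.range k, X ∩ AP k h := by
    ext x
    simp only [Set.mem_iUnion, Set.mem_inter_iff, Finset.mem_range, exists_prop]
    constructor
    · intro hx
      exact ⟨x % k, Nat.mod_lt _ hk, hx, (mem_AP_iff (Nat.mod_lt _ hk)).mpr rfl⟩
    · rintro ⟨h, _, hx, _⟩
      exact hx
  have step1 : μ X ≤ ∑ h ∈ Finset.range k, μ (X ∩ AP k h) := by
    conv_lhs => rw [hcover]
    exact mu_biUnion_le hμ _ _
  have step2 : ∑ h ∈ Finset.range k, μ (X ∩ AP k h)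
      ≤ ∑ h ∈ Finset.range k, (if (X ∩ AP k h).Nonempty then (1:ℝ)/k else 0) := by
    apply Finset.sum_le_sum
    intro h _
    by_cases hne : (X ∩ AP k h).Nonempty
    · rw [if_pos hne]
      exact mu_subAP hμ hk Set.inter_subset_right
    · rw [if_neg hne, Set.not_nonempty_iff_eq_empty.mp hne, mu_empty hμ]
  have step3 : ∑ h ∈ Finset.range k, (if (X ∩ AP k h).Nonempty then (1:ℝ)/k else 0)
      = (rk k X : ℝ) / k := by
    rw [← Finset.sum_filter]
    rw [Finset.sum_const]
    have hcard : ((Finset.range k).filter fun h => (X ∩ AP k h).Nonempty).card = rk k X := by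
      rw [rk, ← Set.ncard_coe_finset]
      congr 1
      ext h
      simp [Finset.mem_filter, Finset.mem_range]
    rw [hcard, nsmul_eq_mul]
    ring
  calc μ X ≤ _ := step1
    _ ≤ _ := step2
    _ = _ := step3

end mu


/-- The small subsets of ℕ form an ideal: ℕ is not small, subsets of small sets
are small, and unions of two small sets are small. -/
theorem smallSet_isIdeal :
    ¬ SmallSet (Set.univ : Set ℕ) ∧
    (∀ X Y : Set ℕ, X ⊆ Y → SmallSet Y → SmallSet X) ∧
    (∀ X Y : Set ℕ, SmallSet X → SmallSet Y → SmallSet (X ∪ Y)) := by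
  refine ⟨?_, ?_, ?_⟩
  · intro h
    have := h rho rho_isUQD
    rw [rho_univ] at this
    exact one_ne_zero this
  · intro X Y hXY hY μ hμ
    have h0 : rho Y = 0 := hY rho rho_isUQD
    have hle : μ X ≤ rho Y := by
      apply le_rho
      intro k hk
      refine (mu_le_f hμ hk X).trans ?_
      gcongr
      exact_mod_cast rk_mono hk hXY
    rw [h0] at hle
    exact le_antisymm hle (mu_nonneg hμ X)
  · intro X Y hX hY μ hμ
    have h3 := hμ.2.2.1 X Y
    rw [hX μ hμ, hY μ hμ] at h3
    have := mu_nonneg hμ (X ∪ Y)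
    linarith
end

section
/- Let X ⊆ ℕ and let (k_n)_{n ≥ 1} be an increasing sequence of positive integers such that, for every positive integer m, m divides k_n for all sufficiently large n. Then r_{k_n}(X)/k_n converges as n → ∞, and its limit equals inf_{k ≥ 1} r_k(X)/k. -/
open Set Filter Topology

open Classical in
lemma rk_eq_card (k : ℕ) (X : Set ℕ) :
    rk k X = ((Finset.range k).filter (fun h => (X ∩ AP k h).Nonempty)).card := by
  rw [rk, ← Set.ncard_coe_finset]
  congr 1
  ext h
  simp [Finset.mem_filter, Finset.mem_range, and_comm]

open Classical in
lemma rk_mul_le_s4 (X : Set ℕ) (d c : ℕ) (hd : 0 < d) :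
    rk (d * c) X ≤ rk d X * c := by
  rw [rk_eq_card, rk_eq_card]
  set Gd := (Finset.range d).filter (fun h => (X ∩ AP d h).Nonempty) with hGd
  have hsub : (Finset.range (d*c)).filter (fun h => (X ∩ AP (d*c) h).Nonempty)
      ⊆ (Finset.range (d*c)).filter (fun h => h % d ∈ Gd) := by
    intro h hh
    simp only [Finset.mem_filter, Finset.mem_range, hGd] at hh ⊢
    obtain ⟨hlt, x, hxX, m, hxm⟩ := hh
    refine ⟨hlt, Nat.mod_lt _ hd, x, hxX, m * c + h / d, ?_⟩
    subst hxm
    rw [Nat.mul_add, Nat.add_assoc, Nat.div_add_mod]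
    ring
  refine (Finset.card_le_card hsub).trans ?_
  rw [Finset.card_eq_sum_card_fiberwise (f := fun h => h % d) (t := Gd)
    (s := (Finset.range (d*c)).filter (fun h => h % d ∈ Gd))
    (fun x hx => (Finset.mem_filter.1 (Finset.mem_coe.1 hx)).2)]
  have hfib : ∀ r ∈ Gd,
      (((Finset.range (d*c)).filter (fun h => h % d ∈ Gd)).filter (fun h => h % d = r)).card ≤ c := by
    intro r _
    refine (Finset.card_le_card_of_injOn (fun h => h / d) (t := Finset.range c) ?_ ?_).trans_eq
      (Finset.card_range c)
    · intro h hh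
      simp only [Finset.mem_coe, Finset.mem_filter, Finset.mem_range] at hh ⊢
      exact (Nat.div_lt_iff_lt_mul hd).2 (by linarith [hh.1.1, Nat.mul_comm d c])
    · intro h1 h1m h2 h2m he
      simp only [Finset.mem_coe, Finset.mem_filter] at h1m h2m
      have e1 := Nat.div_add_mod h1 d
      have e2 := Nat.div_add_mod h2 d
      rw [h1m.2] at e1; rw [h2m.2] at e2
      simp only at he
      rw [← e1, ← e2, he]
  calc ∑ r ∈ Gd, (((Finset.range (d*c)).filter (fun h => h % d ∈ Gd)).filter
        (fun h => h % d = r)).card ≤ ∑ _r ∈ Gd, c := Finset.sum_le_sum hfib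
    _ = Gd.card * c := by rw [Finset.sum_const, smul_eq_mul]

lemma rk_div_le (X : Set ℕ) {d k : ℕ} (hd : 0 < d) (hdk : d ∣ k) (hk : 0 < k) :
    (rk k X : ℝ) / k ≤ (rk d X : ℝ) / d := by
  obtain ⟨c, rfl⟩ := hdk
  have hc : 0 < c := by
    rcases Nat.eq_zero_or_pos c with h | h
    · simp [h] at hk
    · exact h
  have h1 : (rk (d * c) X : ℝ) ≤ (rk d X : ℝ) * c := by exact_mod_cast rk_mul_le_s4 X d c hd
  have hdr : (0:ℝ) < d := by exact_mod_cast hd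
  have hcr : (0:ℝ) < c := by exact_mod_cast hc
  rw [div_le_div_iff₀ (by push_cast; positivity) hdr]
  push_cast
  nlinarith

/-- If (k_n) is an increasing sequence of positive integers such that every
positive integer divides k_n for all large n, then r_{k_n}(X)/k_n converges to
inf_{k ≥ 1} r_k(X)/k. -/
theorem tendsto_rk_div (X : Set ℕ) (k : ℕ → ℕ) (hmono : StrictMono k)
    (hpos : ∀ n, 0 < k n) (hdvd : ∀ m : ℕ, 0 < m → ∀ᶠ n in atTop, m ∣ k n) :
    Tendsto (fun n : ℕ => (rk (k n) X : ℝ) / (k n : ℝ)) atTop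
      (𝓝 (⨅ m : ℕ+, (rk (m : ℕ) X : ℝ) / ((m : ℕ) : ℝ))) := by
  have hL : BddBelow (Set.range fun m : ℕ+ => (rk (m : ℕ) X : ℝ) / ((m : ℕ) : ℝ)) := by
    refine ⟨0, ?_⟩
    rintro x ⟨m, rfl⟩
    positivity
  rw [tendsto_order]
  constructor
  · intro a ha
    refine Eventually.of_forall fun n => lt_of_lt_of_le ha ?_
    exact ciInf_le hL ⟨k n, hpos n⟩
  · intro b hb
    obtain ⟨m, hm⟩ := exists_lt_of_ciInf_lt hb
    filter_upwards [hdvd m m.2] with n hn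
    exact lt_of_le_of_lt (rk_div_le X m.2 hn (hpos n)) hm
end

section
/- For every k ∈ ℕ, the set of positive integers that factor into a product of exactly k primes counted with multiplicity (i.e., {n ∈ ℕ : n ≥ 1 and Ω(n) = k}) is small, and likewise the set of positive integers with at most k prime factors counted with multiplicity (i.e., {n ∈ ℕ : n ≥ 1 and Ω(n) ≤ k}) is small. -/
open Set Filter Topology

variable {μ : Set ℕ → ℝ}

lemma uqd_empty (hμ : IsUpperQuasiDensity μ) : μ ∅ = 0 := by
  have h := hμ.2.2.2.1 ∅ 2 (by norm_num)
  rw [Set.image_empty] at h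
  push_cast at h
  linarith

lemma uqd_nonneg (hμ : IsUpperQuasiDensity μ) (X : Set ℕ) : 0 ≤ μ X := by
  have h1 := hμ.2.2.1 X Xᶜ
  rw [Set.union_compl_self, hμ.1] at h1
  have h2 := hμ.2.1 Xᶜ
  linarith

lemma uqd_biUnion (hμ : IsUpperQuasiDensity μ) {ι : Type*} [DecidableEq ι]
    (s : Finset ι) (f : ι → Set ℕ) : μ (⋃ i ∈ s, f i) ≤ ∑ i ∈ s, μ (f i) := by
  induction s using Finset.induction with
  | empty => simp [uqd_empty hμ]
  | insert _ _ hx ih =>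
    rename_i a s'
    rw [Finset.set_biUnion_insert, Finset.sum_insert hx]
    calc μ (f a ∪ ⋃ i ∈ s', f i) ≤ μ (f a) + μ (⋃ i ∈ s', f i) := hμ.2.2.1 _ _
    _ ≤ μ (f a) + ∑ i ∈ s', μ (f i) := by linarith

lemma uqd_AP (hμ : IsUpperQuasiDensity μ) {q h : ℕ} (hq : 0 < q) {Y : Set ℕ}
    (hY : Y ⊆ AP q h) : μ Y ≤ 1 / q := by
  have hYeq : Y = (fun x => x + h) '' ((fun x => q * x) '' {m | q * m + h ∈ Y}) := by
    ext x
    simp only [Set.mem_image, Set.mem_setOf_eq]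
    constructor
    · intro hx
      obtain ⟨m, rfl⟩ := hY hx
      exact ⟨q * m, ⟨m, hx, rfl⟩, rfl⟩
    · rintro ⟨y, ⟨m, hm, rfl⟩, rfl⟩
      exact hm
  rw [hYeq, hμ.2.2.2.2, hμ.2.2.2.1 _ _ hq]
  have h1 := hμ.2.1 {m | q * m + h ∈ Y}
  have hq' : (0:ℝ) < q := by exact_mod_cast hq
  gcongr

lemma uqd_sub_singleton (hμ : IsUpperQuasiDensity μ) {a : ℕ} {Y : Set ℕ}
    (hY : Y ⊆ {a}) : μ Y = 0 := by
  set W : Set ℕ := {m | m + a ∈ Y} with hWdef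
  have hW : W ⊆ {0} := by
    intro m hm
    have := hY hm
    simp only [Set.mem_singleton_iff] at this ⊢
    omega
  have hYeq : Y = (fun x => x + a) '' W := by
    ext x
    simp only [Set.mem_image, hWdef, Set.mem_setOf_eq]
    constructor
    · intro hx
      have hxa := hY hx
      simp only [Set.mem_singleton_iff] at hxa
      subst hxa
      exact ⟨0, by simpa using hx, by simp⟩
    · rintro ⟨m, hm, rfl⟩
      exact hm
  have hWeq : (fun x => 2 * x) '' W = W := by
    ext x
    simp only [Set.mem_image]
    constructor
    · rintro ⟨m, hm, rfl⟩
      have := hW hm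
      simp only [Set.mem_singleton_iff] at this
      subst this
      simpa using hm
    · intro hx
      have := hW hx
      simp only [Set.mem_singleton_iff] at this
      subst this
      exact ⟨0, hx, by simp⟩
  have h4 := hμ.2.2.2.1 W 2 (by norm_num)
  rw [hWeq] at h4
  have hW0 : μ W = 0 := by
    push_cast at h4
    linarith
  rw [hYeq, hμ.2.2.2.2, hW0]

lemma small_subsets_E : ∀ K : ℕ, ∀ Y : Set ℕ,
    Y ⊆ {n : ℕ | 1 ≤ n ∧ n.primeFactorsList.length = K} →
    ∀ μ : Set ℕ → ℝ, IsUpperQuasiDensity μ → μ Y = 0 := by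
  intro K
  induction K with
  | zero =>
    intro Y hY μ hμ
    refine uqd_sub_singleton hμ (a := 1) ?_
    intro n hn
    obtain ⟨h1, h2⟩ := hY hn
    have hnil : n.primeFactorsList = [] := List.length_eq_zero_iff.mp h2
    have := (Nat.primeFactorsList_eq_nil n).mp hnil
    simp only [Set.mem_singleton_iff]
    omega
  | succ K ih =>
    intro Y hY μ hμ
    have key : ∀ N : ℕ, μ Y ≤ Real.exp (-(∑ p ∈ N.primesBelow, (1:ℝ)/p)) := by
      intro N
      set q : ℕ := ∏ p ∈ N.primesBelow, p with hqdef
      have hq0 : 0 < q := Finset.prod_pos fun p hp => (Nat.prime_of_mem_primesBelow hp).pos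
      have hY2 : ∀ n ∈ Y, 2 ≤ n := by
        intro n hn
        obtain ⟨h1, h2⟩ := hY hn
        by_contra hlt
        have hn1 : n = 1 := by omega
        subst hn1
        simp [Nat.primeFactorsList_one] at h2
      set s : Finset ℕ := Finset.filter q.Coprime (Finset.range q) with hsdef
      set A : ℕ → Set ℕ := fun p => {n | n ∈ Y ∧ n.minFac = p} with hAdef
      set T : Set ℕ := {n | n ∈ Y ∧ N ≤ n.minFac} with hTdef
      have hcover : Y = (⋃ p ∈ N.primesBelow, A p) ∪ ⋃ h ∈ s, (T ∩ AP q h) := by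
        apply Set.Subset.antisymm
        · intro n hn
          have hn2 := hY2 n hn
          have hpf : n.minFac.Prime := Nat.minFac_prime (by omega)
          rcases Nat.lt_or_ge n.minFac N with hlt | hge
          · exact Or.inl (Set.mem_biUnion (Nat.mem_primesBelow.mpr ⟨hlt, hpf⟩) ⟨hn, rfl⟩)
          · refine Or.inr ?_
            have hcop : Nat.Coprime q n := by
              apply Nat.Coprime.prod_left
              intro p hp
              have hpp := Nat.prime_of_mem_primesBelow hp
              rw [Nat.Prime.coprime_iff_not_dvd hpp]
              intro hdvd
              have h1 := Nat.minFac_le_of_dvd hpp.two_le hdvd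
              have h2 := Nat.lt_of_mem_primesBelow hp
              omega
            have hmod : n % q ∈ s := by
              rw [hsdef, Finset.mem_filter, Finset.mem_range]
              refine ⟨Nat.mod_lt _ hq0, ?_⟩
              have : Nat.gcd q n = Nat.gcd (n % q) q := Nat.gcd_rec q n
              have h2 : Nat.Coprime (n % q) q := by
                unfold Nat.Coprime at hcop ⊢
                omega
              exact h2.symm
            exact Set.mem_biUnion hmod ⟨⟨hn, hge⟩, ⟨n / q, (Nat.div_add_mod n q).symm⟩⟩
        · apply Set.union_subset
          · exact Set.iUnion₂_subset fun p _ n hn => hn.1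
          · exact Set.iUnion₂_subset fun h _ n hn => hn.1.1
      have hAp : ∀ p ∈ N.primesBelow, μ (A p) = 0 := by
        intro p hp
        have hpp := Nat.prime_of_mem_primesBelow hp
        have hAeq : A p = (fun x => p * x) '' {m | p * m ∈ A p} := by
          ext n
          simp only [Set.mem_image, Set.mem_setOf_eq]
          constructor
          · intro hn
            have hdvd : p ∣ n := hn.2 ▸ Nat.minFac_dvd n
            exact ⟨n / p, by rwa [Nat.mul_div_cancel' hdvd], Nat.mul_div_cancel' hdvd⟩
          · rintro ⟨m, hm, rfl⟩
            exact hm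
        have hsub : {m | p * m ∈ A p} ⊆ {n : ℕ | 1 ≤ n ∧ n.primeFactorsList.length = K} := by
          intro m hm
          obtain ⟨hmY, _⟩ := hm
          obtain ⟨h1, h2⟩ := hY hmY
          have hm0 : m ≠ 0 := by
            rintro rfl
            simp at h1
          refine ⟨by omega, ?_⟩
          have hperm := (Nat.perm_primeFactorsList_mul hpp.ne_zero hm0).length_eq
          rw [Nat.primeFactorsList_prime hpp] at hperm
          simp only [List.length_append, List.length_cons, List.length_nil] at hperm
          omega
        have hC := ih _ hsub μ hμ
        rw [hAeq, hμ.2.2.2.1 _ _ hpp.pos, hC, zero_div]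
      have hT1 : ∀ h ∈ s, μ (T ∩ AP q h) ≤ 1 / (q:ℝ) :=
        fun h _ => uqd_AP hμ hq0 Set.inter_subset_right
      have hbound : μ Y ≤ (q.totient : ℝ) / q := by
        calc μ Y = μ ((⋃ p ∈ N.primesBelow, A p) ∪ ⋃ h ∈ s, (T ∩ AP q h)) := by rw [← hcover]
          _ ≤ μ (⋃ p ∈ N.primesBelow, A p) + μ (⋃ h ∈ s, (T ∩ AP q h)) := hμ.2.2.1 _ _
          _ ≤ (∑ p ∈ N.primesBelow, μ (A p)) + ∑ h ∈ s, μ (T ∩ AP q h) :=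
              add_le_add (uqd_biUnion hμ _ _) (uqd_biUnion hμ _ _)
          _ ≤ 0 + ∑ h ∈ s, (1 / (q:ℝ)) := by
              refine add_le_add ?_ (Finset.sum_le_sum hT1)
              rw [Finset.sum_congr rfl hAp]
              simp
          _ = (s.card : ℝ) * (1 / q) := by rw [zero_add, Finset.sum_const, nsmul_eq_mul]
          _ = (q.totient : ℝ) / q := by
              rw [Nat.totient_eq_card_coprime, hsdef]
              ring_nf
      have hfrac : (q.totient : ℝ) / q ≤ Real.exp (-(∑ p ∈ N.primesBelow, (1:ℝ)/p)) := by
        have hpfq : q.primeFactors = N.primesBelow :=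
          Nat.primeFactors_prod fun p hp => Nat.prime_of_mem_primesBelow hp
        have htot : (q.totient : ℝ) = q * ∏ p ∈ N.primesBelow, (1 - (p:ℝ)⁻¹) := by
          have h := Nat.totient_eq_mul_prod_factors q
          rw [hpfq] at h
          have h2 := congrArg (fun x : ℚ => (x : ℝ)) h
          push_cast at h2
          exact h2
        have hq0' : (0:ℝ) < q := by exact_mod_cast hq0
        rw [htot, mul_comm, mul_div_assoc, div_self hq0'.ne', mul_one]
        calc ∏ p ∈ N.primesBelow, (1 - (p:ℝ)⁻¹)
            ≤ ∏ p ∈ N.primesBelow, Real.exp (-(1/p)) := by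
              apply Finset.prod_le_prod
              · intro p hp
                have h2 := (Nat.prime_of_mem_primesBelow hp).two_le
                have hp1 : (1:ℝ) ≤ p := by
                  have h1 : 1 ≤ p := by omega
                  exact_mod_cast h1
                have : (p:ℝ)⁻¹ ≤ 1 := by
                  rw [inv_le_one_iff₀]
                  right
                  exact hp1
                linarith
              · intro p hp
                have hle := Real.add_one_le_exp (-(p:ℝ)⁻¹)
                have hle2 : 1 - (p:ℝ)⁻¹ ≤ Real.exp (-(p:ℝ)⁻¹) := by linarith
                simpa [one_div] using hle2
          _ = Real.exp (∑ p ∈ N.primesBelow, -(1/(p:ℝ))) :=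
              (Real.exp_sum N.primesBelow (fun p => -(1/(p:ℝ)))).symm
          _ = Real.exp (-(∑ p ∈ N.primesBelow, (1:ℝ)/p)) := by rw [← Finset.sum_neg_distrib]
      exact hbound.trans hfrac
    have hlim : Tendsto (fun N : ℕ => Real.exp (-(∑ p ∈ N.primesBelow, (1:ℝ)/p))) atTop (nhds 0) := by
      apply Real.tendsto_exp_atBot.comp
      apply tendsto_neg_atTop_atBot.comp
      have hns := not_summable_one_div_on_primes
      have hnn : ∀ n : ℕ, 0 ≤ Set.indicator {p | p.Prime} (fun n : ℕ => (1:ℝ)/n) n := by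
        intro n
        apply Set.indicator_nonneg
        intro a _
        positivity
      have h := (not_summable_iff_tendsto_nat_atTop_of_nonneg hnn).mp hns
      convert h using 2 with N
      rw [Nat.primesBelow, Finset.sum_filter]
      apply Finset.sum_congr rfl
      intro i _
      rw [Set.indicator_apply]
      simp only [Set.mem_setOf_eq]
    have h0 : μ Y ≤ 0 := ge_of_tendsto' hlim key
    linarith [uqd_nonneg hμ Y]


/-- For every k, the set of positive integers with exactly k prime factors
(counted with multiplicity), and the set of those with at most k prime factors,
are small. -/
theorem smallSet_omega_eq_and_le (k : ℕ) :
    SmallSet {n : ℕ | 1 ≤ n ∧ n.primeFactorsList.length = k} ∧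
    SmallSet {n : ℕ | 1 ≤ n ∧ n.primeFactorsList.length ≤ k} := by
  constructor
  · intro μ hμ
    exact small_subsets_E k _ (fun n hn => hn) μ hμ
  · intro μ hμ
    have hdecomp : {n : ℕ | 1 ≤ n ∧ n.primeFactorsList.length ≤ k}
        = ⋃ j ∈ Finset.range (k+1), {n : ℕ | 1 ≤ n ∧ n.primeFactorsList.length = j} := by
      ext n
      simp only [Set.mem_setOf_eq, Set.mem_iUnion, Finset.mem_range]
      constructor
      · rintro ⟨h1, h2⟩
        exact ⟨_, by omega, h1, rfl⟩
      · rintro ⟨j, hj, h1, h2⟩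
        exact ⟨h1, by omega⟩
    have h1 : μ {n : ℕ | 1 ≤ n ∧ n.primeFactorsList.length ≤ k}
        ≤ ∑ j ∈ Finset.range (k+1), μ {n : ℕ | 1 ≤ n ∧ n.primeFactorsList.length = j} := by
      rw [hdecomp]
      exact uqd_biUnion hμ _ _
    have h2 : ∑ j ∈ Finset.range (k+1), μ {n : ℕ | 1 ≤ n ∧ n.primeFactorsList.length = j} = 0 := by
      apply Finset.sum_eq_zero
      intro j _
      exact small_subsets_E j _ (fun n hn => hn) μ hμ
    have h3 := uqd_nonneg hμ {n : ℕ | 1 ≤ n ∧ n.primeFactorsList.length ≤ k}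
    linarith
end
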